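/- Let d ∈ {1,2} and let k ∈ T^d have at least one coordinate different from π. Then ∫_{T^d} (𝓔_k(q) − E_min(k))^{-1} dη(q) = +∞, i.e. the nonnegative function q ↦ (𝓔_k(q) − E_min(k))^{-1} (defined a.e.) is not Lebesgue integrable on T^d. -/

import Mathlib

open MeasureTheory Real Filter
open Set
open scoped ENNReal

noncomputable section

instance fact_two_pi_pos : Fact (0 < 2 * Real.pi) := ⟨by positivity⟩

/-- The `d`-dimensional torus `(ℝ/2πℤ)^d`. -/
abbrev Torus (d : ℕ) : Type := Fin d → AddCircle (2 * Real.pi)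

/-- Cosine as a function on the circle `ℝ/2πℤ`. -/
noncomputable def torusCos : AddCircle (2 * Real.pi) → ℝ := Real.cos_periodic.lift

/-- The one-particle dispersion `ε(p) = 2∑ᵢ (1 − cos pⁱ)` on the torus. -/
noncomputable def eps (d : ℕ) (p : Torus d) : ℝ := 2 * ∑ i, (1 - torusCos (p i))

/-- The normalized Haar measure `η` on the torus `T^d`. -/
noncomputable def η (d : ℕ) : Measure (Torus d) :=
  Measure.pi fun _ => (AddCircle.haarAddCircle : Measure (AddCircle (2 * Real.pi)))

instance (d : ℕ) : IsProbabilityMeasure (η d) := by unfold η; infer_instance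

/-- The two-particle fiber dispersion `𝓔ₖ(p) = ε(k−p) + ε(p)`. -/
noncomputable def calE (d : ℕ) (k p : Torus d) : ℝ := eps d (k - p) + eps d p

/-- `E_min(k) = min_{p ∈ T^d} 𝓔ₖ(p)`. -/
noncomputable def Emin (d : ℕ) (k : Torus d) : ℝ := sInf (Set.range (calE d k))

/-- `E_max(k) = max_{p ∈ T^d} 𝓔ₖ(p)`. -/
noncomputable def Emax (d : ℕ) (k : Torus d) : ℝ := sSup (Set.range (calE d k))

/-- The three-particle dispersion `E(K;p,q) = ε(K−p−q) + ε(p) + ε(q)`. -/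
noncomputable def EE (d : ℕ) (K p q : Torus d) : ℝ := eps d (K - p - q) + eps d p + eps d q

/-- `E_min(K) = min_{p,q ∈ T^d} E(K;p,q)`. -/
noncomputable def E3min (d : ℕ) (K : Torus d) : ℝ :=
  sInf (Set.range fun pq : Torus d × Torus d => EE d K pq.1 pq.2)

/-- `E_max(K) = max_{p,q ∈ T^d} E(K;p,q)`. -/
noncomputable def E3max (d : ℕ) (K : Torus d) : ℝ :=
  sSup (Set.range fun pq : Torus d × Torus d => EE d K pq.1 pq.2)

/-- The two-particle determinant `Δ_μ(k;z) = 1 + μ ∫ (𝓔ₖ(q) − z)⁻¹ dη(q)`. -/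
noncomputable def Delta2 (d : ℕ) (μ : ℝ) (k : Torus d) (z : ℝ) : ℝ :=
  1 + μ * ∫ q, (calE d k q - z)⁻¹ ∂(η d)

/-- The channel determinant `Δ_μ(K,p;z) = 1 + μ ∫ (E(K;p,q) − z)⁻¹ dη(q)`. -/
noncomputable def Delta3 (d : ℕ) (μ : ℝ) (K p : Torus d) (z : ℝ) : ℝ :=
  1 + μ * ∫ q, (EE d K p q - z)⁻¹ ∂(η d)

/-- The point `π ∈ ℝ/2πℤ`. -/
noncomputable def piPt : AddCircle (2 * Real.pi) := ((Real.pi : ℝ) : AddCircle (2 * Real.pi))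

/- ### auxiliary real lemmas -/

lemma torusCos_coe (x : ℝ) : torusCos (x : AddCircle (2 * Real.pi)) = Real.cos x := rfl

lemma continuous_torusCos : Continuous torusCos := Real.continuous_cos.quotient_liftOn' _

lemma torusCos_le_one (a : AddCircle (2 * Real.pi)) : torusCos a ≤ 1 := by
  induction a using QuotientAddGroup.induction_on with
  | H x => exact Real.cos_le_one x

lemma sq_cos_sum (x y : ℝ) : (cos (x - y) + cos y) ^ 2 ≤ 2 + 2 * cos x := by
  have h : cos x = cos (x - y) * cos y - sin (x - y) * sin y := by
    rw [← Real.cos_add]; ring_nf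
  nlinarith [sin_sq_add_cos_sq (x - y), sin_sq_add_cos_sq y, sq_nonneg (sin (x - y) - sin y)]

lemma cos_sum_le (x y : ℝ) : cos (x - y) + cos y ≤ Real.sqrt (2 + 2 * cos x) := by
  calc cos (x - y) + cos y ≤ |cos (x - y) + cos y| := le_abs_self _
  _ = Real.sqrt ((cos (x - y) + cos y) ^ 2) := (Real.sqrt_sq_eq_abs _).symm
  _ ≤ Real.sqrt (2 + 2 * cos x) := Real.sqrt_le_sqrt (sq_cos_sum x y)

noncomputable def y0 (x : ℝ) : ℝ := if 0 ≤ Real.cos (x / 2) then x / 2 else x / 2 + Real.pi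

lemma sqrt_22 (x : ℝ) : Real.sqrt (2 + 2 * cos x) = 2 * |cos (x / 2)| := by
  have h : 2 + 2 * cos x = (2 * |cos (x / 2)|) ^ 2 := by
    have := Real.cos_sq (x / 2)
    rw [show 2 * (x / 2) = x by ring] at this
    rw [mul_pow, sq_abs]
    nlinarith
  rw [h, Real.sqrt_sq (by positivity)]

lemma cos_y0_identity (x t : ℝ) :
    cos (x - (y0 x + t)) + cos (y0 x + t) = Real.sqrt (2 + 2 * cos x) * cos t := by
  rw [sqrt_22]
  unfold y0
  split_ifs with h
  · have h1 : x - (x / 2 + t) = x / 2 - t := by ring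
    rw [h1, Real.cos_sub, Real.cos_add, abs_of_nonneg h]; ring
  · have h1 : x - (x / 2 + π + t) = (x / 2 - t) - π := by ring
    rw [h1, Real.cos_sub_pi, show x / 2 + π + t = (x / 2 + t) + π by ring, Real.cos_add_pi,
      Real.cos_sub, Real.cos_add, abs_of_neg (not_le.mp h)]; ring

lemma two_add_two_cos_nonneg (x : ℝ) : 0 ≤ 2 + 2 * cos x := by
  nlinarith [Real.neg_one_le_cos x]

lemma sqrt22_le_two (x : ℝ) : Real.sqrt (2 + 2 * cos x) ≤ 2 := by
  have h4 : Real.sqrt 4 = 2 := by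
    rw [show (4:ℝ) = 2 ^ 2 by norm_num, Real.sqrt_sq two_pos.le]
  calc Real.sqrt (2 + 2 * cos x) ≤ Real.sqrt 4 :=
        Real.sqrt_le_sqrt (by nlinarith [Real.cos_le_one x])
  _ = 2 := h4

/- ### basic identities for calE -/

lemma calE_eq (d : ℕ) (k q : Torus d) :
    calE d k q = ∑ i, (4 - 2 * (torusCos (k i - q i) + torusCos (q i))) := by
  unfold calE eps
  rw [Finset.mul_sum, Finset.mul_sum, ← Finset.sum_add_distrib]
  refine Finset.sum_congr rfl fun i _ => ?_
  have : (k - q) i = k i - q i := rfl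
  rw [this]; ring

lemma calE_nonneg (d : ℕ) (k q : Torus d) : 0 ≤ calE d k q := by
  rw [calE_eq]
  apply Finset.sum_nonneg
  intro i _
  have h1 := torusCos_le_one (k i - q i)
  have h2 := torusCos_le_one (q i)
  linarith

lemma Emin_le (d : ℕ) (k q : Torus d) : Emin d k ≤ calE d k q :=
  csInf_le ⟨0, by rintro v ⟨p, rfl⟩; exact calE_nonneg d k p⟩ ⟨q, rfl⟩

/- ### the base divergence lemma on ℝ -/

lemma base_top : ∫⁻ x in Set.Ioc (0:ℝ) Real.pi, ENNReal.ofReal x⁻¹ = ⊤ := by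
  have hIoo : ∫⁻ x in Set.Ioo (0:ℝ) Real.pi, ENNReal.ofReal x⁻¹ = ⊤ := by
    have h1 : ¬ IntegrableOn (fun x : ℝ => x⁻¹) (Set.Ioo 0 Real.pi) := by
      intro h
      have h2 : IntegrableOn (fun x : ℝ => x ^ (-1 : ℝ)) (Set.Ioo 0 Real.pi) := by
        refine h.congr_fun (fun x hx => ?_) measurableSet_Ioo
        rw [Real.rpow_neg_one]
      rw [intervalIntegral.integrableOn_Ioo_rpow_iff Real.pi_pos] at h2
      norm_num at h2
    have hmeas : AEStronglyMeasurable (fun x : ℝ => x⁻¹)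
        (volume.restrict (Set.Ioo 0 Real.pi)) := measurable_inv.aestronglyMeasurable
    have hnn : 0 ≤ᵐ[volume.restrict (Set.Ioo 0 Real.pi)] (fun x : ℝ => x⁻¹) :=
      (ae_restrict_iff' measurableSet_Ioo).mpr (ae_of_all _ fun x hx => inv_nonneg.mpr hx.1.le)
    by_contra hne
    exact h1 ⟨hmeas, (hasFiniteIntegral_iff_ofReal hnn).mpr (lt_top_iff_ne_top.mpr hne)⟩
  refine top_le_iff.mp ?_
  rw [← hIoo]
  exact lintegral_mono_set Set.Ioo_subset_Ioc_self

lemma base_top' (c : ℝ) (hc : 0 < c) :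
    ∫⁻ x in Set.Ioc (0:ℝ) Real.pi, ENNReal.ofReal (c * x⁻¹) = ⊤ := by
  simp_rw [ENNReal.ofReal_mul hc.le]
  rw [lintegral_const_mul' _ _ ENNReal.ofReal_ne_top, base_top]
  exact ENNReal.mul_top (by simp [hc, not_le])

lemma base_top'' {c : ℝ} (hc : 0 < c) {f : ℝ → ℝ≥0∞}
    (h : ∀ x ∈ Set.Ioc (0:ℝ) Real.pi, ENNReal.ofReal (c * x⁻¹) ≤ f x) :
    ∫⁻ x in Set.Ioc (0:ℝ) Real.pi, f x = ⊤ := by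
  refine top_le_iff.mp ?_
  rw [← base_top' c hc]
  exact setLIntegral_mono' measurableSet_Ioc h

/- ### transferring integrals from the circle to ℝ -/

lemma circle_lint {g : AddCircle (2 * Real.pi) → ℝ≥0∞} (hg : Measurable g) :
    ENNReal.ofReal (2 * Real.pi) * ∫⁻ a, g a ∂(AddCircle.haarAddCircle) =
      ∫⁻ x in Set.Ioc (-Real.pi) Real.pi, g x := by
  have h1 := (AddCircle.measurePreserving_mk (2 * Real.pi) (-Real.pi)).lintegral_comp hg
  rw [show -Real.pi + 2 * Real.pi = Real.pi by ring,
    AddCircle.volume_eq_smul_haarAddCircle, lintegral_smul_measure] at h1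
  exact h1.symm

lemma circle_lint_top {g : AddCircle (2 * Real.pi) → ℝ≥0∞} (hg : Measurable g)
    (h : ∫⁻ x in Set.Ioc (-Real.pi) Real.pi, g x = ⊤) :
    ∫⁻ a, g a ∂(AddCircle.haarAddCircle : Measure (AddCircle (2 * Real.pi))) = ⊤ := by
  by_contra hne
  have := circle_lint hg
  rw [h] at this
  exact (ENNReal.mul_ne_top ENNReal.ofReal_ne_top hne) this

lemma cos_lt_one_of_Ioc {x : ℝ} (hx : x ∈ Set.Ioc (0:ℝ) Real.pi) : cos x < 1 := by
  rcases lt_or_eq_of_le (Real.cos_le_one x) with h | h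
  · exact h
  · exfalso
    obtain ⟨n, hn⟩ := (Real.cos_eq_one_iff x).mp h
    rcases lt_trichotomy n 0 with hn0 | hn0 | hn0
    · have : (n:ℝ) ≤ -1 := by exact_mod_cast Int.le_sub_one_of_lt hn0
      nlinarith [Real.pi_pos, hx.1]
    · subst hn0; simp at hn; rw [← hn] at hx; exact lt_irrefl _ hx.1
    · have : (1:ℝ) ≤ (n:ℝ) := by exact_mod_cast hn0
      nlinarith [Real.pi_gt_three, hx.2]

/- ### the divergence of ∫ (2 eps)⁻¹ -/

lemma measurable_ofReal_inv_eps (d : ℕ) :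
    Measurable fun θ : Torus d => ENNReal.ofReal ((2 * eps d θ)⁻¹) := by
  apply ENNReal.measurable_ofReal.comp
  apply Measurable.inv
  apply Measurable.const_mul
  unfold eps
  apply Measurable.const_mul
  exact Finset.measurable_sum _ fun i _ =>
    (continuous_const.sub (continuous_torusCos.comp (continuous_apply i))).measurable

lemma eps_lint_top (d : ℕ) (hd : d = 1 ∨ d = 2) :
    ∫⁻ θ, ENNReal.ofReal ((2 * eps d θ)⁻¹) ∂(η d) = ⊤ := by
  rcases hd with rfl | rfl
  · -- d = 1
    have mp := measurePreserving_funUnique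
      (AddCircle.haarAddCircle : Measure (AddCircle (2 * Real.pi))) (Fin 1)
    set G : AddCircle (2 * Real.pi) → ℝ≥0∞ :=
      fun a => ENNReal.ofReal ((4 * (1 - torusCos a))⁻¹) with hG
    have hGmeas : Measurable G :=
      ENNReal.measurable_ofReal.comp (Measurable.inv (Measurable.const_mul
        ((continuous_const.sub continuous_torusCos).measurable) _))
    have hcomp : ∀ θ : Torus 1, ENNReal.ofReal ((2 * eps 1 θ)⁻¹) =
        G (MeasurableEquiv.funUnique (Fin 1) (AddCircle (2 * Real.pi)) θ) := by
      intro θ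
      simp only [hG, MeasurableEquiv.funUnique_apply]
      congr 1
      unfold eps
      rw [Fin.sum_univ_one]
      norm_num
      ring_nf
    calc ∫⁻ θ, ENNReal.ofReal ((2 * eps 1 θ)⁻¹) ∂(η 1)
        = ∫⁻ θ, G (MeasurableEquiv.funUnique (Fin 1) (AddCircle (2 * Real.pi)) θ) ∂(η 1) := by
          simp_rw [hcomp]
      _ = ∫⁻ a, G a ∂(AddCircle.haarAddCircle) := mp.lintegral_comp hGmeas
      _ = ⊤ := by
          apply circle_lint_top hGmeas
          apply top_le_iff.mp
          rw [← base_top'' (c := (2 * Real.pi)⁻¹) (by positivity)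
            (f := fun x => ENNReal.ofReal ((4 * (1 - Real.cos x))⁻¹)) ?_]
          · exact lintegral_mono_set (fun x hx => ⟨by nlinarith [Real.pi_pos, hx.1], hx.2⟩)
          · intro x hx
            apply ENNReal.ofReal_le_ofReal
            rw [← mul_inv]
            apply inv_anti₀
            · have := cos_lt_one_of_Ioc hx
              nlinarith
            · nlinarith [Real.one_sub_sq_div_two_le_cos (x := x), hx.1, hx.2, Real.pi_pos]
  · -- d = 2
    have mp := measurePreserving_piFinTwo
      (fun _ : Fin 2 => (AddCircle.haarAddCircle : Measure (AddCircle (2 * Real.pi))))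
    set G2 : AddCircle (2 * Real.pi) × AddCircle (2 * Real.pi) → ℝ≥0∞ :=
      fun z => ENNReal.ofReal ((4 * (1 - torusCos z.1) + 4 * (1 - torusCos z.2))⁻¹) with hG2
    have hG2meas : Measurable G2 := by
      apply ENNReal.measurable_ofReal.comp
      apply Measurable.inv
      exact (((continuous_const.sub (continuous_torusCos.comp continuous_fst)).const_smul
        (4:ℝ)).add ((continuous_const.sub
          (continuous_torusCos.comp continuous_snd)).const_smul (4:ℝ))).measurable
    have hcomp : ∀ θ : Torus 2, ENNReal.ofReal ((2 * eps 2 θ)⁻¹) =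
        G2 (MeasurableEquiv.piFinTwo (fun _ => AddCircle (2 * Real.pi)) θ) := by
      intro θ
      simp only [hG2, MeasurableEquiv.piFinTwo_apply]
      congr 1
      unfold eps
      rw [Fin.sum_univ_two]
      ring_nf
    have hinner_meas : Measurable fun a =>
        ∫⁻ b, G2 (a, b) ∂(AddCircle.haarAddCircle) := hG2meas.lintegral_prod_right'
    calc ∫⁻ θ, ENNReal.ofReal ((2 * eps 2 θ)⁻¹) ∂(η 2)
        = ∫⁻ θ, G2 (MeasurableEquiv.piFinTwo (fun _ => AddCircle (2 * Real.pi)) θ) ∂(η 2) := by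
          simp_rw [hcomp]
      _ = ∫⁻ z, G2 z ∂(AddCircle.haarAddCircle.prod AddCircle.haarAddCircle) :=
          mp.lintegral_comp hG2meas
      _ = ∫⁻ a, ∫⁻ b, G2 (a, b) ∂(AddCircle.haarAddCircle) ∂(AddCircle.haarAddCircle) :=
          lintegral_prod G2 hG2meas.aemeasurable
      _ = ⊤ := by
          apply circle_lint_top hinner_meas
          apply top_le_iff.mp
          rw [← base_top'' (c := (8 * Real.pi)⁻¹) (by positivity)
            (f := fun x => ∫⁻ b, G2 ((x:ℝ), b) ∂(AddCircle.haarAddCircle)) ?_]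
          · exact lintegral_mono_set (fun x hx => ⟨by nlinarith [Real.pi_pos, hx.1], hx.2⟩)
          · intro x hx
            have hgx : Measurable fun b => G2 ((x:ℝ), b) :=
              hG2meas.comp (measurable_const.prodMk measurable_id)
            refine (ENNReal.mul_le_mul_iff_right (a := ENNReal.ofReal (2 * Real.pi))
              (ENNReal.ofReal_pos.mpr (by positivity)).ne' ENNReal.ofReal_ne_top).mp ?_
            rw [circle_lint hgx, ← ENNReal.ofReal_mul (by positivity)]
            have hconst : 2 * Real.pi * ((8 * Real.pi)⁻¹ * x⁻¹) = (4 * x)⁻¹ := by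
              have hpi := Real.pi_ne_zero
              field_simp
              ring
            rw [hconst]
            calc ENNReal.ofReal (4 * x)⁻¹
                = ENNReal.ofReal ((4 * x ^ 2)⁻¹ * x) := by
                  congr 1
                  have hx0 : x ≠ 0 := hx.1.ne'
                  field_simp
              _ = ∫⁻ _ in Set.Ioc (0:ℝ) x, ENNReal.ofReal ((4 * x ^ 2)⁻¹) := by
                  rw [setLIntegral_const, Real.volume_Ioc, sub_zero,
                    ← ENNReal.ofReal_mul (by positivity)]
              _ ≤ ∫⁻ y in Set.Ioc (0:ℝ) x, G2 ((x:ℝ), (y:ℝ)) := by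
                  refine setLIntegral_mono' measurableSet_Ioc fun y hy => ?_
                  simp only [hG2]
                  rw [torusCos_coe, torusCos_coe]
                  apply ENNReal.ofReal_le_ofReal
                  apply inv_anti₀
                  · have := cos_lt_one_of_Ioc hx
                    nlinarith [Real.cos_le_one y]
                  · have h1 : 1 - Real.cos x ≤ x ^ 2 / 2 := by
                      nlinarith [Real.one_sub_sq_div_two_le_cos (x := x)]
                    have h2 : 1 - Real.cos y ≤ y ^ 2 / 2 := by
                      nlinarith [Real.one_sub_sq_div_two_le_cos (x := y)]
                    nlinarith [hy.1, hy.2, hx.1]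
              _ ≤ ∫⁻ y in Set.Ioc (-Real.pi) Real.pi, G2 ((x:ℝ), (y:ℝ)) :=
                  lintegral_mono_set (fun y hy =>
                    ⟨by nlinarith [Real.pi_pos, hy.1], hy.2.trans hx.2⟩)

lemma coe_surj (a : AddCircle (2 * Real.pi)) : ∃ t : ℝ, (t : AddCircle (2 * Real.pi)) = a :=
  QuotientAddGroup.induction_on a fun t => ⟨t, rfl⟩

lemma haar_sing : (AddCircle.haarAddCircle : Measure (AddCircle (2 * Real.pi))) {0} = 0 := by
  have hvol : (volume : Measure (AddCircle (2 * Real.pi))) {0} = 0 := by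
    have hball := AddCircle.volume_closedBall (2 * Real.pi) (x := (0 : AddCircle (2 * Real.pi))) 0
    have hsub : ({0} : Set (AddCircle (2 * Real.pi))) ⊆ Metric.closedBall 0 0 := by
      intro y hy; simp_all [Metric.mem_closedBall]
    refine le_antisymm ?_ zero_le
    calc (volume : Measure (AddCircle (2 * Real.pi))) {0}
        ≤ volume (Metric.closedBall (0 : AddCircle (2 * Real.pi)) 0) := measure_mono hsub
      _ = 0 := by rw [hball]; simp [min_eq_right Real.pi_pos.le]
  rw [AddCircle.volume_eq_smul_haarAddCircle, Measure.smul_apply, smul_eq_mul] at hvol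
  rcases mul_eq_zero.mp hvol with h | h
  · exact absurd h (ENNReal.ofReal_pos.mpr (by positivity)).ne'
  · exact h

instance (d : ℕ) : (η d).IsAddLeftInvariant := by unfold η; infer_instance

/-- for `d ∈ {1,2}` and `k ∈ T^d` with a coordinate different from `π`,
the function `q ↦ (𝓔ₖ(q) − E_min(k))⁻¹` is not Lebesgue integrable on `T^d`
(its integral is `+∞`). -/
theorem divergence_at_bottom (d : ℕ) (hd : d = 1 ∨ d = 2) (k : Torus d)
    (hk : ∃ i, k i ≠ piPt) :
    (∫⁻ q, ENNReal.ofReal ((calE d k q - Emin d k)⁻¹) ∂(η d)) = ⊤ ∧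
    ¬ Integrable (fun q => (calE d k q - Emin d k)⁻¹) (η d) := by
  have hnonneg : ∀ q, 0 ≤ (calE d k q - Emin d k)⁻¹ :=
    fun q => inv_nonneg.mpr (sub_nonneg.mpr (Emin_le d k q))
  have hrep : ∀ i : Fin d, ∃ y : ℝ, (y : AddCircle (2 * Real.pi)) = k i :=
    fun i => coe_surj (k i)
  choose x hx using hrep
  set c : Fin d → ℝ := fun i => Real.sqrt (2 + 2 * Real.cos (x i)) with hc
  set q₀ : Torus d := fun i => ((y0 (x i) : ℝ) : AddCircle (2 * Real.pi)) with hq₀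
  have htc0 : torusCos (0 : AddCircle (2 * Real.pi)) = 1 := by
    rw [show (0 : AddCircle (2 * Real.pi)) = ((0:ℝ) : AddCircle (2 * Real.pi)) from rfl,
      torusCos_coe, Real.cos_zero]
  have hcalE : ∀ θ : Torus d,
      calE d k (q₀ + θ) = ∑ i, (4 - 2 * (c i * torusCos (θ i))) := by
    intro θ
    rw [calE_eq]
    refine Finset.sum_congr rfl fun i _ => ?_
    obtain ⟨t, ht⟩ := coe_surj (θ i)
    have h1 : (q₀ + θ) i = ((y0 (x i) + t : ℝ) : AddCircle (2 * Real.pi)) := by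
      rw [Pi.add_apply, hq₀, ← ht]; norm_cast
    have h2 : k i - (q₀ + θ) i = ((x i - (y0 (x i) + t) : ℝ) : AddCircle (2 * Real.pi)) := by
      rw [h1, ← hx i]; norm_cast
    rw [h2, h1, ← ht, torusCos_coe, torusCos_coe, torusCos_coe, hc]
    have := cos_y0_identity (x i) t
    rw [show Real.cos (x i - (y0 (x i) + t)) + Real.cos (y0 (x i) + t)
      = Real.sqrt (2 + 2 * Real.cos (x i)) * Real.cos t from this]
  have hcalEq₀ : calE d k q₀ = ∑ i, (4 - 2 * c i) := by
    have h := hcalE 0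
    rw [add_zero] at h
    rw [h]
    refine Finset.sum_congr rfl fun i _ => ?_
    rw [Pi.zero_apply, htc0, mul_one]
  have hEmin : Emin d k = ∑ i, (4 - 2 * c i) := by
    apply le_antisymm
    · rw [← hcalEq₀]; exact Emin_le d k q₀
    · apply le_csInf ⟨calE d k q₀, Set.mem_range_self q₀⟩
      rintro b ⟨q, rfl⟩
      rw [calE_eq]
      refine Finset.sum_le_sum fun i _ => ?_
      obtain ⟨u, hu⟩ := coe_surj (q i)
      have h2 : k i - q i = ((x i - u : ℝ) : AddCircle (2 * Real.pi)) := by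
        rw [← hx i, ← hu]; norm_cast
      rw [h2, ← hu, torusCos_coe, torusCos_coe]
      have := cos_sum_le (x i) u
      simp only [hc]
      linarith
  have hterm_nonneg : ∀ (θ : Torus d) (i : Fin d),
      0 ≤ (4 - 2 * (c i * torusCos (θ i))) - (4 - 2 * c i) := by
    intro θ i
    have h1 := torusCos_le_one (θ i)
    have h2 : 0 ≤ c i := Real.sqrt_nonneg _
    nlinarith
  have hub : ∀ θ : Torus d, calE d k (q₀ + θ) - Emin d k ≤ 2 * eps d θ := by
    intro θ
    rw [hcalE θ, hEmin, ← Finset.sum_sub_distrib]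
    have h4 : 2 * eps d θ = ∑ i, 4 * (1 - torusCos (θ i)) := by
      unfold eps
      rw [Finset.mul_sum, Finset.mul_sum]
      refine Finset.sum_congr rfl fun i _ => ?_
      ring
    rw [h4]
    refine Finset.sum_le_sum fun i _ => ?_
    have h1 := torusCos_le_one (θ i)
    have h2 : 0 ≤ c i := Real.sqrt_nonneg _
    have h3 : c i ≤ 2 := sqrt22_le_two (x i)
    nlinarith
  obtain ⟨i₀, hi₀⟩ := hk
  have hci : 0 < c i₀ := by
    rw [hc]
    apply Real.sqrt_pos.mpr
    rcases lt_or_eq_of_le (two_add_two_cos_nonneg (x i₀)) with h | h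
    · exact h
    · exfalso
      have hcos : Real.cos (x i₀) = -1 := by linarith
      obtain ⟨n, hn⟩ := Real.cos_eq_neg_one_iff.mp hcos
      apply hi₀
      rw [← hx i₀, ← hn]
      unfold piPt
      have : ((Real.pi + n * (2 * Real.pi) : ℝ) : AddCircle (2 * Real.pi)) =
          ((Real.pi : ℝ) : AddCircle (2 * Real.pi)) +
          ((n * (2 * Real.pi) : ℝ) : AddCircle (2 * Real.pi)) := by norm_cast
      rw [this, show ((n * (2 * Real.pi) : ℝ) : AddCircle (2 * Real.pi)) = 0 from
        AddCircle.coe_eq_zero_iff _ |>.mpr ⟨n, by rw [zsmul_eq_mul]⟩, add_zero]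
  have htclt : ∀ θ : Torus d, θ i₀ ≠ 0 → torusCos (θ i₀) < 1 := by
    intro θ hθ
    rcases lt_or_eq_of_le (torusCos_le_one (θ i₀)) with h | h
    · exact h
    · exfalso
      obtain ⟨t, ht⟩ := coe_surj (θ i₀)
      apply hθ
      rw [← ht]
      apply (AddCircle.coe_eq_zero_iff _).mpr
      have hcos : Real.cos t = 1 := by rw [← torusCos_coe, ht, h]
      obtain ⟨n, hn⟩ := (Real.cos_eq_one_iff t).mp hcos
      exact ⟨n, by rw [zsmul_eq_mul, hn]⟩
  have hlow : ∀ θ : Torus d, θ i₀ ≠ 0 → 0 < calE d k (q₀ + θ) - Emin d k := by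
    intro θ hθ
    rw [hcalE θ, hEmin, ← Finset.sum_sub_distrib]
    refine lt_of_lt_of_le ?_
      (Finset.single_le_sum (fun i _ => hterm_nonneg θ i) (Finset.mem_univ i₀))
    have h1 := htclt θ hθ
    nlinarith
  have hNull : η d {θ : Torus d | θ i₀ = 0} = 0 := by
    have hset : {θ : Torus d | θ i₀ = 0} = Set.pi Set.univ
        (fun i => if i = i₀ then ({0} : Set (AddCircle (2 * Real.pi))) else Set.univ) := by
      ext θ
      simp only [Set.mem_setOf_eq, Set.mem_pi, Set.mem_univ, forall_true_left]
      constructor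
      · intro h i
        by_cases hi : i = i₀
        · subst hi; simp [h]
        · simp [hi]
      · intro h
        have := h i₀
        simpa using this
    rw [hset]
    unfold η
    rw [Measure.pi_pi]
    apply Finset.prod_eq_zero (Finset.mem_univ i₀)
    rw [if_pos rfl]
    exact haar_sing
  set F : Torus d → ℝ≥0∞ := fun q => ENNReal.ofReal ((calE d k q - Emin d k)⁻¹) with hF
  have hae : ∀ᵐ θ ∂(η d), ENNReal.ofReal ((2 * eps d θ)⁻¹) ≤ F (q₀ + θ) := by
    rw [ae_iff]
    refine measure_mono_null (fun θ hθ => ?_) hNull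
    simp only [Set.mem_setOf_eq, not_le] at hθ
    by_contra h0
    simp only [Set.mem_setOf_eq] at h0
    have hle : ENNReal.ofReal ((2 * eps d θ)⁻¹) ≤ F (q₀ + θ) :=
      ENNReal.ofReal_le_ofReal (inv_anti₀ (hlow θ h0) (hub θ))
    exact absurd hle (not_le.mpr hθ)
  have hlint : ∫⁻ q, F q ∂(η d) = ⊤ := by
    rw [← lintegral_add_left_eq_self F q₀]
    apply top_le_iff.mp
    rw [← eps_lint_top d hd]
    exact lintegral_mono_ae hae
  refine ⟨hlint, fun hint => ?_⟩
  have hfin := hint.2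
  rw [hasFiniteIntegral_iff_ofReal (ae_of_all _ hnonneg)] at hfin
  rw [hlint] at hfin
  exact lt_irrefl _ hfin
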